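/- For any vertex v of Π, exactly one of the m(λ) connected components of Δ_v contains vertices (i,j) with arbitrarily large row index i, and for all sufficiently large i that component contains exactly one vertex in row i. Moreover, for any point x in the tangent cone C_v, all coordinates s_{i,j}(x) with (i,j) ∈ Δ_v and i sufficiently large are equal, and s_{i,j}(x) = s_{i,j}(v) for (i,j) ∈ Δ_v with i sufficiently small. -/

import Mathlib

open scoped BigOperators

noncomputable section

/-- The window sum `χ_i(x) = x_{i-n+1} + ... + x_i`. -/
def chiW (n : ℕ) (x : ℤ → ℝ) (i : ℤ) : ℝ := ∑ l ∈ Finset.Icc (i - n + 1) i, x l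

/-- The level `k = a_0 + ... + a_{n-1}`. -/
def klev (n : ℕ) (a : ℤ → ℤ) : ℤ := ∑ l ∈ Finset.Icc (0 : ℤ) ((n : ℤ) - 1), a l

/-- The affine space `V` of real sequences vanishing far to the right and equal to the
(`n`-periodic) sequence `a` far to the left. -/
def Vspace (n : ℕ) (a : ℤ → ℤ) : Set (ℤ → ℝ) :=
  {x | (∃ N : ℤ, ∀ i, N ≤ i → x i = 0) ∧ (∃ N : ℤ, ∀ i, i ≤ N → x i = (a i : ℝ))}

/-- The infinite-dimensional polyhedron `Π ⊂ V`, cut out by the inequalities `x_i ≥ 0`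
and `χ_i(x) ≤ k` for all `i ∈ ℤ`. -/
def PiPoly (n : ℕ) (a : ℤ → ℤ) : Set (ℤ → ℝ) :=
  {x | x ∈ Vspace n a ∧ (∀ i, 0 ≤ x i) ∧ ∀ i, chiW n x i ≤ (klev n a : ℝ)}

/-- A face of `Π`: a nonempty intersection of `Π` with some collection of the
hyperplanes `E_i = {x_i = 0}` and `H_i = {χ_i(x) = k}`. -/
def IsFacePi (n : ℕ) (a : ℤ → ℤ) (f : Set (ℤ → ℝ)) : Prop :=
  f.Nonempty ∧ ∃ S T : Set ℤ,
    f = PiPoly n a ∩ (⋂ i ∈ S, {x | x i = 0}) ∩ (⋂ i ∈ T, {x | chiW n x i = (klev n a : ℝ)})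

/-- The reference sequence `T^m` (real valued): `0` for `i > mn`, `a_i` otherwise. -/
def TseqR (n : ℕ) (a : ℤ → ℤ) (m i : ℤ) : ℝ :=
  if (m * n : ℤ) < i then 0 else (a i : ℝ)

/-- The plane-filling GT-pattern coordinate `s_{i,j}(x)` of a point `x ∈ V`. -/
def sPatR (n : ℕ) (a : ℤ → ℤ) (x : ℤ → ℝ) (p : ℤ × ℤ) : ℝ :=
  (∑ᶠ l : ℤ, if l ≤ p.1 * n + p.2 * ((n : ℤ) - 1) then x l - TseqR n a (p.1 + p.2) l else 0)
    - ∑ l ∈ Finset.Icc (p.1 * n + p.2 * ((n : ℤ) - 1) + 1) ((p.1 + p.2) * n),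
        TseqR n a (p.1 + p.2) l

/-- Adjacency in the rotated square lattice. -/
def LatAdj (p q : ℤ × ℤ) : Prop :=
  q = (p.1 - 1, p.2) ∨ q = (p.1 - 1, p.2 + 1) ∨ q = (p.1 + 1, p.2) ∨ q = (p.1 + 1, p.2 - 1)

/-- The equality graph `Θ(x)`: lattice-adjacent indices are joined iff the corresponding
coordinates of the plane-filling GT-pattern of `x` agree. -/
def ThetaGraph (n : ℕ) (a : ℤ → ℤ) (x : ℤ → ℝ) : SimpleGraph (ℤ × ℤ) :=
  SimpleGraph.fromRel fun p q => LatAdj p q ∧ sPatR n a x p = sPatR n a x q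

/-- The shift `(i,j) ↦ (i-n+1, j+n)`. -/
def shiftPt (n : ℕ) (p : ℤ × ℤ) : ℤ × ℤ := (p.1 - (n - 1), p.2 + n)

/-- The relation on connected components of a graph on `ℤ × ℤ` identifying a component
with its image under the shift `(i,j) ↦ (i-n+1, j+n)`. -/
def shiftRel (n : ℕ) (G : SimpleGraph (ℤ × ℤ)) :
    G.ConnectedComponent → G.ConnectedComponent → Prop :=
  fun c c' => {p | G.connectedComponentMk p = c'} =
    shiftPt n '' {p | G.connectedComponentMk p = c}

/-- The subgraph of the `n`-cycle associated to `λ`: vertices `i` and `i+1` of `ZMod n`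
are joined exactly when `a_{(i+1) mod n} = 0`. -/
def cycG (n : ℕ) (a : ℤ → ℤ) : SimpleGraph (ZMod n) :=
  SimpleGraph.fromRel fun r s => s = r + 1 ∧ a ((s.val : ℤ)) = 0

/-- `v` is a vertex of `Π`: it belongs to a minimal element of the face lattice. -/
def IsVertexPi (n : ℕ) (a : ℤ → ℤ) (v : ℤ → ℝ) : Prop :=
  ∃ f, IsFacePi n a f ∧ v ∈ f ∧ ∀ g, IsFacePi n a g → g ⊆ f → g = f

/-- The tangent cone `C_v = {v + α(x - v) : x ∈ Π, α ≥ 0}` of `Π` at `v`. -/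
def coneAtPi (n : ℕ) (a : ℤ → ℤ) (v : ℤ → ℝ) : Set (ℤ → ℝ) :=
  {y | ∃ x ∈ PiPoly n a, ∃ α : ℝ, 0 ≤ α ∧ y = v + α • (x - v)}

-- ## coordinates
def Lco (n : ℕ) (p : ℤ × ℤ) : ℤ := p.1 * n + p.2 * ((n : ℤ) - 1)
def mco (p : ℤ × ℤ) : ℤ := p.1 + p.2
def Pt (n : ℕ) (L m : ℤ) : ℤ × ℤ := (L - ((n : ℤ) - 1) * m, (n : ℤ) * m - L)

lemma Lco_Pt (n : ℕ) (L m : ℤ) : Lco n (Pt n L m) = L := by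
  simp only [Lco, Pt]; ring
lemma mco_Pt (n : ℕ) (L m : ℤ) : mco (Pt n L m) = m := by
  simp only [mco, Pt]; ring
lemma Pt_coords (n : ℕ) (p : ℤ × ℤ) : Pt n (Lco n p) (mco p) = p := by
  simp only [Pt, Lco, mco]; ext <;> simp <;> ring
lemma Pt_fst (n : ℕ) (L m : ℤ) : (Pt n L m).1 = L - ((n : ℤ) - 1) * m := rfl

lemma sPat_eq (n : ℕ) (a : ℤ → ℤ) (x : ℤ → ℝ) (p : ℤ × ℤ) :
    sPatR n a x p = (∑ᶠ l : ℤ, if l ≤ Lco n p then x l - TseqR n a (mco p) l else 0)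
      - ∑ l ∈ Finset.Icc (Lco n p + 1) (mco p * n), TseqR n a (mco p) l := rfl

-- ## interval helpers
lemma IccIoc (u t : ℤ) : Finset.Icc (u + 1) t = Finset.Ioc u t := by
  ext; simp [Finset.mem_Icc, Finset.mem_Ioc]
lemma Ioc_split_top {C L : ℤ} (h : C ≤ L) :
    Finset.Ioc C (L + 1) = insert (L + 1) (Finset.Ioc C L) := by
  ext; simp [Finset.mem_Ioc, Finset.mem_insert]; omega
lemma sum_Ioc_top {M : Type*} [AddCommMonoid M] {C L : ℤ} (h : C ≤ L) (f : ℤ → M) :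
    ∑ l ∈ Finset.Ioc C (L + 1), f l = (∑ l ∈ Finset.Ioc C L, f l) + f (L + 1) := by
  rw [Ioc_split_top h, Finset.sum_insert (by simp [Finset.mem_Ioc]), add_comm]
lemma Ioc_split_bot {C L : ℤ} (h : C < L) :
    Finset.Ioc C L = insert (C + 1) (Finset.Ioc (C + 1) L) := by
  ext; simp [Finset.mem_Ioc, Finset.mem_insert]; omega
lemma sum_Ioc_bot {M : Type*} [AddCommMonoid M] {C L : ℤ} (h : C < L) (f : ℤ → M) :
    ∑ l ∈ Finset.Ioc C L, f l = f (C + 1) + ∑ l ∈ Finset.Ioc (C + 1) L, f l := by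
  rw [Ioc_split_bot h, Finset.sum_insert (by simp [Finset.mem_Ioc])]
lemma Ioc_disj {C B L : ℤ} : Disjoint (Finset.Ioc C B) (Finset.Ioc B L) := by
  rw [Finset.disjoint_left]
  intro x hx hy
  simp only [Finset.mem_Ioc] at hx hy
  omega
lemma sum_Ioc_cut {M : Type*} [AddCommMonoid M] {C B L : ℤ} (h1 : C ≤ B) (h2 : B ≤ L) (f : ℤ → M) :
    ∑ l ∈ Finset.Ioc C L, f l
      = (∑ l ∈ Finset.Ioc C B, f l) + ∑ l ∈ Finset.Ioc B L, f l := by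
  rw [← Finset.Ioc_union_Ioc_eq_Ioc h1 h2,
      Finset.sum_union Ioc_disj]

-- ## periodicity
lemma aper {n : ℕ} {a : ℤ → ℤ} (hper : ∀ i, a (i + n) = a i) :
    ∀ (s t : ℤ), a (t + n * s) = a t := by
  intro s
  induction s using Int.induction_on with
  | zero => simp
  | succ k ih => intro t
                 have h1 : t + (n:ℤ) * ((k:ℤ)+1) = (t + n * k) + n := by ring
                 rw [h1, hper (t + n * k)]; exact ih t
  | pred k ih => intro t
                 have h1 : t + (n:ℤ) * (-(k:ℤ)-1) + n = t + n * (-(k:ℤ)) := by ring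
                 have h2 := hper (t + n * (-(k:ℤ)-1))
                 rw [h1] at h2
                 exact h2.symm.trans (ih t)

lemma klev_Ioc {n : ℕ} {a : ℤ → ℤ} : klev n a = ∑ l ∈ Finset.Ioc (-1 : ℤ) ((n : ℤ) - 1), a l := by
  rw [klev, show (0:ℤ) = -1 + 1 by ring, IccIoc]

lemma persum {n : ℕ} {a : ℤ → ℤ} (hn : 1 ≤ n) (hper : ∀ i, a (i + n) = a i) (t : ℤ) :
    ∑ l ∈ Finset.Ioc t (t + n), a l = klev n a := by
  have hν : (1:ℤ) ≤ (n:ℤ) := by exact_mod_cast hn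
  have key : ∀ u : ℤ, (∑ l ∈ Finset.Ioc u (u + n), a l)
      = ∑ l ∈ Finset.Ioc (u+1) (u + 1 + n), a l := by
    intro u
    rw [sum_Ioc_bot (by omega : u < u + (n:ℤ)) a,
        show u + 1 + (n:ℤ) = (u + n) + 1 by ring,
        sum_Ioc_top (by omega : u + 1 ≤ u + (n:ℤ)) a,
        show u + (n:ℤ) + 1 = (u + 1) + n by ring, hper (u+1)]
    exact add_comm _ _
  have base : ∑ l ∈ Finset.Ioc (-1 : ℤ) (-1 + n), a l = klev n a := by
    rw [klev_Ioc, show (-1 : ℤ) + n = (n:ℤ) - 1 by ring]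
  have : ∀ s : ℤ, ∑ l ∈ Finset.Ioc s (s + n), a l = klev n a := by
    intro s
    induction s using Int.induction_on with
    | zero => rw [show (0:ℤ) = -1 + 1 by norm_num, ← key (-1)]; exact base
    | succ k ih => rw [← key k]; exact ih
    | pred k ih => rw [key (-(k:ℤ)-1), show (-(k:ℤ)-1)+1 = -(k:ℤ) by ring]; exact ih
  exact this t

-- ## Stage B : difference identities
section diffs
variable {n : ℕ} {a : ℤ → ℤ} {x : ℤ → ℝ} {Ax : ℤ}

lemma persumR (hn : 1 ≤ n) (hper : ∀ i, a (i + n) = a i) (t : ℤ) :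
    ∑ l ∈ Finset.Ioc t (t + n), (a l : ℝ) = (klev n a : ℝ) := by
  have h := persum hn hper t
  have : ((∑ l ∈ Finset.Ioc t (t + n), a l : ℤ) : ℝ) = (klev n a : ℝ) := by
    exact_mod_cast congrArg (fun z : ℤ => (z : ℝ)) h
  rw [← this]
  push_cast
  rfl

lemma Tval_le {m l : ℤ} (h : l ≤ m * n) : TseqR n a m l = (a l : ℝ) := by
  simp [TseqR, not_lt.mpr h]

lemma Tval_gt {m l : ℤ} (h : m * n < l) : TseqR n a m l = 0 := by
  simp [TseqR, h]

lemma Fsum (hx : ∀ l, l ≤ Ax → x l = (a l : ℝ)) {C L m : ℤ}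
    (h1 : C ≤ Ax) (h2 : C ≤ m * n) (h3 : C ≤ L) :
    (∑ᶠ l : ℤ, if l ≤ L then x l - TseqR n a m l else 0)
      = ∑ l ∈ Finset.Ioc C L, (x l - TseqR n a m l) := by
  rw [finsum_eq_finset_sum_of_support_subset _ (s := Finset.Ioc C L) ?hsupp]
  · exact Finset.sum_congr rfl fun l hl => if_pos (Finset.mem_Ioc.mp hl).2
  case hsupp =>
    intro l hl
    simp only [Function.mem_support, ne_eq] at hl
    simp only [Finset.coe_Ioc, Set.mem_Ioc]
    by_cases hL : l ≤ L
    · refine ⟨?_, hL⟩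
      by_contra h'
      push_neg at h'
      have hx0 : x l = (a l : ℝ) := hx l (by omega)
      have hT : TseqR n a m l = (a l : ℝ) := Tval_le (by omega)
      exact hl (by rw [if_pos hL, hx0, hT, sub_self])
    · exact absurd (if_neg hL) hl

lemma sH (hx : ∀ l, l ≤ Ax → x l = (a l : ℝ)) (L m : ℤ) :
    sPatR n a x (Pt n (L+1) m) = sPatR n a x (Pt n L m) + x (L+1) := by
  rw [sPat_eq, sPat_eq, Lco_Pt, mco_Pt, Lco_Pt, mco_Pt]
  set C := min (min Ax (m * (n:ℤ))) L with hC
  have h1 : C ≤ Ax := by omega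
  have h2 : C ≤ m * (n:ℤ) := by omega
  have h3 : C ≤ L := by omega
  rw [Fsum hx h1 h2 h3, Fsum hx h1 h2 (by omega : C ≤ L + 1),
      sum_Ioc_top h3 (fun l => x l - TseqR n a m l)]
  rw [IccIoc, IccIoc]
  by_cases hc : L + 1 ≤ m * (n:ℤ)
  · rw [sum_Ioc_bot (by omega : L < m * (n:ℤ)) (TseqR n a m)]
    ring
  · have e1 : Finset.Ioc L (m * (n:ℤ)) = ∅ := Finset.Ioc_eq_empty (by omega)
    have e2 : Finset.Ioc (L+1) (m * (n:ℤ)) = ∅ := Finset.Ioc_eq_empty (by omega)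
    rw [e1, e2, Tval_gt (by omega : m * (n:ℤ) < L + 1)]
    simp

lemma sS (hn : 1 ≤ n) (hper : ∀ i, a (i + n) = a i)
    (hx : ∀ l, l ≤ Ax → x l = (a l : ℝ)) (L m : ℤ) :
    sPatR n a x (Pt n L (m+1)) = sPatR n a x (Pt n L m) - (klev n a : ℝ) := by
  have hν : (1:ℤ) ≤ (n:ℤ) := by exact_mod_cast hn
  rw [sPat_eq, sPat_eq, Lco_Pt, mco_Pt, Lco_Pt, mco_Pt]
  set C := min (min Ax (m * (n:ℤ))) L with hC
  have h1 : C ≤ Ax := by omega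
  have h2 : C ≤ m * (n:ℤ) := by omega
  have h2' : C ≤ (m+1) * (n:ℤ) := by nlinarith
  have h3 : C ≤ L := by omega
  have hmm : m * (n:ℤ) ≤ (m+1) * (n:ℤ) := by nlinarith
  rw [Fsum hx h1 h2 h3, Fsum hx h1 h2' h3, IccIoc, IccIoc]
  have hsplit : ∑ l ∈ Finset.Ioc C L, (x l - TseqR n a (m+1) l)
      = (∑ l ∈ Finset.Ioc C L, (x l - TseqR n a m l))
        + ∑ l ∈ Finset.Ioc C L, (TseqR n a m l - TseqR n a (m+1) l) := by
    rw [← Finset.sum_add_distrib]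
    exact Finset.sum_congr rfl fun l _ => by ring
  rw [hsplit]
  have hper' := persumR (a := a) hn hper (m * (n:ℤ))
  have hmn1 : m * (n:ℤ) + (n:ℤ) = (m+1) * (n:ℤ) := by ring
  rw [hmn1] at hper'
  by_cases c1 : L ≤ m * (n:ℤ)
  · -- case 1
    have hD : ∑ l ∈ Finset.Ioc C L, (TseqR n a m l - TseqR n a (m+1) l) = 0 := by
      apply Finset.sum_eq_zero
      intro l hl
      have hl' := Finset.mem_Ioc.mp hl
      rw [Tval_le (by omega), Tval_le (by nlinarith : l ≤ (m+1) * (n:ℤ)), sub_self]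
    have hG : ∑ l ∈ Finset.Ioc L (m * (n:ℤ)), TseqR n a m l
        = ∑ l ∈ Finset.Ioc L (m * (n:ℤ)), (a l : ℝ) :=
      Finset.sum_congr rfl fun l hl => Tval_le (Finset.mem_Ioc.mp hl).2
    have hG' : ∑ l ∈ Finset.Ioc L ((m+1) * (n:ℤ)), TseqR n a (m+1) l
        = ∑ l ∈ Finset.Ioc L ((m+1) * (n:ℤ)), (a l : ℝ) :=
      Finset.sum_congr rfl fun l hl => Tval_le (Finset.mem_Ioc.mp hl).2
    rw [hD, hG, hG', sum_Ioc_cut c1 hmm (fun l => (a l : ℝ)), hper']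
    ring
  · push_neg at c1
    by_cases c2 : L ≤ (m+1) * (n:ℤ)
    · -- case 2
      have hD : ∑ l ∈ Finset.Ioc C L, (TseqR n a m l - TseqR n a (m+1) l)
          = - ∑ l ∈ Finset.Ioc (m * (n:ℤ)) L, (a l : ℝ) := by
        rw [sum_Ioc_cut h2 (le_of_lt c1) (fun l => TseqR n a m l - TseqR n a (m+1) l)]
        have p1 : ∑ l ∈ Finset.Ioc C (m * (n:ℤ)), (TseqR n a m l - TseqR n a (m+1) l) = 0 := by
          apply Finset.sum_eq_zero
          intro l hl
          have hl' := Finset.mem_Ioc.mp hl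
          rw [Tval_le (by omega), Tval_le (by nlinarith : l ≤ (m+1) * (n:ℤ)), sub_self]
        have p2 : ∑ l ∈ Finset.Ioc (m * (n:ℤ)) L, (TseqR n a m l - TseqR n a (m+1) l)
            = ∑ l ∈ Finset.Ioc (m * (n:ℤ)) L, (-(a l : ℝ)) := by
          apply Finset.sum_congr rfl
          intro l hl
          have hl' := Finset.mem_Ioc.mp hl
          rw [Tval_gt hl'.1, Tval_le (by omega : l ≤ (m+1) * (n:ℤ))]
          ring
        rw [p1, p2, Finset.sum_neg_distrib]
        ring
      have hG : Finset.Ioc L (m * (n:ℤ)) = ∅ := Finset.Ioc_eq_empty (by omega)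
      have hG' : ∑ l ∈ Finset.Ioc L ((m+1) * (n:ℤ)), TseqR n a (m+1) l
          = ∑ l ∈ Finset.Ioc L ((m+1) * (n:ℤ)), (a l : ℝ) :=
        Finset.sum_congr rfl fun l hl => Tval_le (Finset.mem_Ioc.mp hl).2
      rw [hD, hG, hG']
      rw [← hper', sum_Ioc_cut (le_of_lt c1) c2 (fun l => (a l : ℝ))] at *
      simp only [Finset.sum_empty]
      linarith [hper']
    · -- case 3
      push_neg at c2
      have hD : ∑ l ∈ Finset.Ioc C L, (TseqR n a m l - TseqR n a (m+1) l)
          = - (klev n a : ℝ) := by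
        rw [sum_Ioc_cut h2 (by omega : m * (n:ℤ) ≤ L) (fun l => TseqR n a m l - TseqR n a (m+1) l),
            sum_Ioc_cut hmm (le_of_lt c2) (fun l => TseqR n a m l - TseqR n a (m+1) l)]
        have p1 : ∑ l ∈ Finset.Ioc C (m * (n:ℤ)), (TseqR n a m l - TseqR n a (m+1) l) = 0 :=
          Finset.sum_eq_zero fun l hl => by
            have hl' := Finset.mem_Ioc.mp hl
            rw [Tval_le (by omega), Tval_le (by nlinarith : l ≤ (m+1) * (n:ℤ)), sub_self]
        have p2 : ∑ l ∈ Finset.Ioc (m * (n:ℤ)) ((m+1) * (n:ℤ)), (TseqR n a m l - TseqR n a (m+1) l)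
            = ∑ l ∈ Finset.Ioc (m * (n:ℤ)) ((m+1) * (n:ℤ)), (-(a l : ℝ)) :=
          Finset.sum_congr rfl fun l hl => by
            have hl' := Finset.mem_Ioc.mp hl
            rw [Tval_gt hl'.1, Tval_le hl'.2]; ring
        have p3 : ∑ l ∈ Finset.Ioc ((m+1) * (n:ℤ)) L, (TseqR n a m l - TseqR n a (m+1) l) = 0 :=
          Finset.sum_eq_zero fun l hl => by
            have hl' := Finset.mem_Ioc.mp hl
            rw [Tval_gt (by omega), Tval_gt hl'.1, sub_self]
        rw [p1, p2, p3, Finset.sum_neg_distrib, ← hper']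
        ring
      have hG : Finset.Ioc L (m * (n:ℤ)) = ∅ := Finset.Ioc_eq_empty (by omega)
      have hG' : Finset.Ioc L ((m+1) * (n:ℤ)) = ∅ := Finset.Ioc_eq_empty (by omega)
      rw [hD, hG, hG']
      simp only [Finset.sum_empty, Finset.sum_sub_distrib, sub_zero]
      ring

end diffs

-- ## Stage C
section stageC
variable {n : ℕ} {a : ℤ → ℤ} {x : ℤ → ℝ} {Ax : ℤ}

lemma sHchain (hx : ∀ l, l ≤ Ax → x l = (a l : ℝ)) {L L' : ℤ} (m : ℤ) (h : L ≤ L') :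
    sPatR n a x (Pt n L' m) = sPatR n a x (Pt n L m) + ∑ l ∈ Finset.Ioc L L', x l := by
  have key : ∀ d : ℕ, sPatR n a x (Pt n (L + d) m)
      = sPatR n a x (Pt n L m) + ∑ l ∈ Finset.Ioc L (L + d), x l := by
    intro d
    induction d with
    | zero => simp
    | succ e ih =>
        have h1 : (L + (e + 1 : ℕ) : ℤ) = (L + e) + 1 := by push_cast; ring
        rw [h1, sH hx (L + e) m, ih, show ((L:ℤ) + e) + 1 = L + (e + 1) by ring,
            show ((L:ℤ) + (e+1)) = (L + e) + 1 by ring,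
            sum_Ioc_top (by omega : L ≤ L + (e:ℤ)) x]
        push_cast
        ring_nf
  have h2 : L' = L + ((L' - L).toNat : ℤ) := by omega
  rw [h2] at *
  exact key _

lemma sMnat (hn : 1 ≤ n) (hper : ∀ i, a (i + n) = a i)
    (hx : ∀ l, l ≤ Ax → x l = (a l : ℝ)) (L m : ℤ) :
    ∀ d : ℕ, sPatR n a x (Pt n L (m + d)) = sPatR n a x (Pt n L m) - (klev n a : ℝ) * d := by
  intro d
  induction d with
  | zero => simp
  | succ e ih =>
      rw [show m + ((e+1:ℕ):ℤ) = (m + (e:ℤ)) + 1 by push_cast; ring, sS hn hper hx L (m + e), ih]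
      push_cast
      ring

lemma sMiter (hn : 1 ≤ n) (hper : ∀ i, a (i + n) = a i)
    (hx : ∀ l, l ≤ Ax → x l = (a l : ℝ)) (L m m' : ℤ) :
    sPatR n a x (Pt n L m') = sPatR n a x (Pt n L m) - (klev n a : ℝ) * ((m' - m : ℤ) : ℝ) := by
  rcases le_total m m' with h | h
  · have h1 := sMnat hn hper hx L m (m' - m).toNat
    rw [show m + (((m' - m).toNat : ℕ) : ℤ) = m' by omega] at h1
    rw [h1]
    have hcast : (((m' - m).toNat : ℕ) : ℝ) = ((m' - m : ℤ) : ℝ) := by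
      rw [show (((m' - m).toNat : ℕ) : ℝ) = ((((m' - m).toNat : ℕ) : ℤ) : ℝ) by push_cast; ring,
          Int.toNat_of_nonneg (by omega)]
    rw [hcast]
  · have h1 := sMnat hn hper hx L m' (m - m').toNat
    rw [show m' + (((m - m').toNat : ℕ) : ℤ) = m by omega] at h1
    have hcast : (((m - m').toNat : ℕ) : ℝ) = ((m - m' : ℤ) : ℝ) := by
      rw [show (((m - m').toNat : ℕ) : ℝ) = ((((m - m').toNat : ℕ) : ℤ) : ℝ) by push_cast; ring,
          Int.toNat_of_nonneg (by omega)]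
    rw [hcast] at h1
    have : ((m' - m : ℤ) : ℝ) = -((m - m' : ℤ) : ℝ) := by push_cast; ring
    rw [this]
    linarith

lemma sD (hn : 1 ≤ n) (hper : ∀ i, a (i + n) = a i)
    (hx : ∀ l, l ≤ Ax → x l = (a l : ℝ)) (L m : ℤ) :
    sPatR n a x (Pt n (L + n) (m+1))
      = sPatR n a x (Pt n L m) + (chiW n x (L + n) - (klev n a : ℝ)) := by
  have h1 := sS hn hper hx (L + (n:ℤ)) m
  have hLn : L ≤ L + ((n:ℤ)) := by omega
  have h2 := sHchain (n := n) hx m hLn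
  have h3 : chiW n x (L + n) = ∑ l ∈ Finset.Ioc L (L + (n:ℤ)), x l := by
    rw [chiW, show L + (n:ℤ) - (n:ℤ) + 1 = L + 1 by ring]
    rw [show (Finset.Icc (L+1) (L + (n:ℤ))) = Finset.Ioc L (L + (n:ℤ)) from IccIoc L (L + (n:ℤ))]
  rw [h1, h2, h3]
  ring

-- Pt injectivity
lemma Pt_inj {L m L' m' : ℤ} (h : Pt n L m = Pt n L' m') : L = L' ∧ m = m' := by
  constructor
  · have := congrArg (Lco n) h; rwa [Lco_Pt, Lco_Pt] at this
  · have := congrArg mco h; rwa [mco_Pt, mco_Pt] at this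

lemma latadj_cases {p q : ℤ × ℤ} (h : LatAdj p q) :
    (Lco n q = Lco n p - n ∧ mco q = mco p - 1) ∨
    (Lco n q = Lco n p - 1 ∧ mco q = mco p) ∨
    (Lco n q = Lco n p + n ∧ mco q = mco p + 1) ∨
    (Lco n q = Lco n p + 1 ∧ mco q = mco p) := by
  rcases h with h | h | h | h <;> subst h
  · exact Or.inl ⟨by simp only [Lco, mco]; ring, by simp only [Lco, mco]; ring⟩
  · exact Or.inr (Or.inl ⟨by simp only [Lco, mco]; ring, by simp only [Lco, mco]; ring⟩)
  · exact Or.inr (Or.inr (Or.inl ⟨by simp only [Lco, mco]; ring, by simp only [Lco, mco]; ring⟩))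
  · exact Or.inr (Or.inr (Or.inr ⟨by simp only [Lco, mco]; ring, by simp only [Lco, mco]; ring⟩))

lemma latadj_H (n : ℕ) (L m : ℤ) : LatAdj (Pt n L m) (Pt n (L+1) m) := by
  right; right; right
  simp only [Pt, Prod.mk.injEq]
  constructor <;> ring

lemma latadj_D (n : ℕ) (L m : ℤ) : LatAdj (Pt n L m) (Pt n (L + n) (m+1)) := by
  right; right; left
  simp only [Pt, Prod.mk.injEq]
  constructor <;> ring

lemma theta_adj_iff {v : ℤ → ℝ} {p q : ℤ × ℤ} :
    (ThetaGraph n a v).Adj p q ↔ p ≠ q ∧ (LatAdj p q ∨ LatAdj q p) ∧ sPatR n a v p = sPatR n a v q := by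
  rw [ThetaGraph, SimpleGraph.fromRel_adj]
  constructor
  · rintro ⟨hne, h | h⟩
    · exact ⟨hne, Or.inl h.1, h.2⟩
    · exact ⟨hne, Or.inr h.1, h.2.symm⟩
  · rintro ⟨hne, h | h, hs⟩
    · exact ⟨hne, Or.inl ⟨h, hs⟩⟩
    · exact ⟨hne, Or.inr ⟨h, hs.symm⟩⟩

lemma latadj_symm {p q : ℤ × ℤ} (h : LatAdj p q) : LatAdj q p := by
  have pe : ∀ (u : ℤ × ℤ) (b c : ℤ), u.1 = b → u.2 = c → u = (b, c) := by
    intro u b c h1 h2; ext <;> simp [h1, h2]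
  rcases h with h | h | h | h <;> subst h <;> simp only [LatAdj]
  · exact Or.inr (Or.inr (Or.inl (pe _ _ _ (by ring) (by ring))))
  · exact Or.inr (Or.inr (Or.inr (pe _ _ _ (by ring) (by ring))))
  · exact Or.inl (pe _ _ _ (by ring) (by ring))
  · exact Or.inr (Or.inl (pe _ _ _ (by ring) (by ring)))

end stageC

-- ## Stage D : graph machinery
section graph
variable {n : ℕ} {a : ℤ → ℤ} {x : ℤ → ℝ} {Ax : ℤ}

lemma adj_s {p q : ℤ × ℤ} (h : (ThetaGraph n a x).Adj p q) :
    sPatR n a x p = sPatR n a x q := (theta_adj_iff.mp h).2.2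

lemma reach_s {p q : ℤ × ℤ} (h : (ThetaGraph n a x).Reachable p q) :
    sPatR n a x p = sPatR n a x q := by
  obtain ⟨w⟩ := h
  induction w with
  | nil => rfl
  | cons hadj _ ih => exact (adj_s hadj).trans ih

lemma mk_s {p q : ℤ × ℤ}
    (h : (ThetaGraph n a x).connectedComponentMk p = (ThetaGraph n a x).connectedComponentMk q) :
    sPatR n a x p = sPatR n a x q :=
  reach_s (SimpleGraph.ConnectedComponent.eq.mp h)

lemma adj_H_iff (hx : ∀ l, l ≤ Ax → x l = (a l : ℝ)) (L m : ℤ) :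
    (ThetaGraph n a x).Adj (Pt n L m) (Pt n (L+1) m) ↔ x (L+1) = 0 := by
  rw [theta_adj_iff]
  constructor
  · rintro ⟨-, -, hs⟩
    have := sH (n := n) hx L m
    rw [← hs] at this
    linarith
  · intro h0
    refine ⟨?_, Or.inl (latadj_H n L m), ?_⟩
    · intro heq
      have := (Pt_inj heq).1
      omega
    · rw [sH hx L m, h0, add_zero]

lemma adj_D_iff (hn : 1 ≤ n) (hper : ∀ i, a (i + n) = a i)
    (hx : ∀ l, l ≤ Ax → x l = (a l : ℝ)) (L m : ℤ) :
    (ThetaGraph n a x).Adj (Pt n L m) (Pt n (L + n) (m+1)) ↔ chiW n x (L + n) = (klev n a : ℝ) := by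
  rw [theta_adj_iff]
  constructor
  · rintro ⟨-, -, hs⟩
    have := sD (n := n) hn hper hx L m
    rw [← hs] at this
    linarith
  · intro h0
    refine ⟨?_, Or.inl (latadj_D n L m), ?_⟩
    · intro heq
      have := (Pt_inj heq).2
      omega
    · rw [sD hn hper hx L m, h0]
      ring

lemma adj_classify (hn : 1 ≤ n) (hper : ∀ i, a (i + n) = a i)
    (hx : ∀ l, l ≤ Ax → x l = (a l : ℝ)) {p q : ℤ × ℤ} (h : (ThetaGraph n a x).Adj p q) :
    (Lco n q = Lco n p + 1 ∧ mco q = mco p ∧ x (Lco n p + 1) = 0) ∨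
    (Lco n q = Lco n p - 1 ∧ mco q = mco p ∧ x (Lco n p) = 0) ∨
    (Lco n q = Lco n p + n ∧ mco q = mco p + 1 ∧ chiW n x (Lco n p + n) = (klev n a : ℝ)) ∨
    (Lco n q = Lco n p - n ∧ mco q = mco p - 1 ∧ chiW n x (Lco n p) = (klev n a : ℝ)) := by
  obtain ⟨hne, hlat, hs⟩ := theta_adj_iff.mp h
  have hlat' : LatAdj p q := by
    rcases hlat with h' | h'
    · exact h'
    · exact latadj_symm h'
  rcases latadj_cases (n := n) hlat' with ⟨h1, h2⟩ | ⟨h1, h2⟩ | ⟨h1, h2⟩ | ⟨h1, h2⟩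
  · -- q = p with (L - n, m - 1) : diagonal backwards
    right; right; right
    refine ⟨h1, h2, ?_⟩
    have hq : q = Pt n (Lco n p - n) (mco p - 1) := by rw [← h1, ← h2, Pt_coords]
    have hp : p = Pt n (Lco n p) (mco p) := (Pt_coords n p).symm
    have := sD (n := n) hn hper hx (Lco n p - n) (mco p - 1)
    rw [show Lco n p - (n:ℤ) + (n:ℤ) = Lco n p by ring, show mco p - 1 + 1 = mco p by ring,
        ← hq, ← hp] at this
    rw [this] at hs
    linarith
  · -- q at (L-1, m) : horizontal backwards
    right; left
    refine ⟨h1, h2, ?_⟩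
    have hq : q = Pt n (Lco n p - 1) (mco p) := by rw [← h1, ← h2, Pt_coords]
    have hp : p = Pt n (Lco n p) (mco p) := (Pt_coords n p).symm
    have := sH (n := n) hx (Lco n p - 1) (mco p)
    rw [show Lco n p - 1 + 1 = Lco n p by ring, ← hq, ← hp] at this
    rw [this] at hs
    linarith
  · right; right; left
    refine ⟨h1, h2, ?_⟩
    have hq : q = Pt n (Lco n p + n) (mco p + 1) := by rw [← h1, ← h2, Pt_coords]
    have hp : p = Pt n (Lco n p) (mco p) := (Pt_coords n p).symm
    have := sD (n := n) hn hper hx (Lco n p) (mco p)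
    rw [← hq, ← hp] at this
    rw [this] at hs
    linarith
  · left
    refine ⟨h1, h2, ?_⟩
    have hq : q = Pt n (Lco n p + 1) (mco p) := by rw [← h1, ← h2, Pt_coords]
    have hp : p = Pt n (Lco n p) (mco p) := (Pt_coords n p).symm
    have := sH (n := n) hx (Lco n p) (mco p)
    rw [← hq, ← hp] at this
    rw [this] at hs
    linarith

lemma col_inj (hn : 1 ≤ n) (hper : ∀ i, a (i + n) = a i)
    (hx : ∀ l, l ≤ Ax → x l = (a l : ℝ)) (hk : 0 < klev n a) {L m m' : ℤ}
    (h : (ThetaGraph n a x).connectedComponentMk (Pt n L m)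
       = (ThetaGraph n a x).connectedComponentMk (Pt n L m')) : m = m' := by
  have hs := mk_s h
  have hi := sMiter hn hper hx L m m'
  have hkR : (0:ℝ) < (klev n a : ℝ) := by exact_mod_cast hk
  have h0 : (klev n a : ℝ) * ((m' - m : ℤ) : ℝ) = 0 := by linarith
  rcases mul_eq_zero.mp h0 with h' | h'
  · exact absurd h' (ne_of_gt hkR)
  · have : (m' - m : ℤ) = 0 := by exact_mod_cast h'
    omega

lemma col_inj' (hn : 1 ≤ n) (hper : ∀ i, a (i + n) = a i)
    (hx : ∀ l, l ≤ Ax → x l = (a l : ℝ)) (hk : 0 < klev n a) {p q : ℤ × ℤ}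
    (h : (ThetaGraph n a x).connectedComponentMk p = (ThetaGraph n a x).connectedComponentMk q)
    (hL : Lco n p = Lco n q) : p = q := by
  have hp : p = Pt n (Lco n p) (mco p) := (Pt_coords n p).symm
  have hq : q = Pt n (Lco n p) (mco q) := by rw [hL, Pt_coords]
  rw [hp, hq] at h
  have := col_inj hn hper hx hk h
  rw [hp, hq, this]

-- shift
lemma shiftPt_Pt (n : ℕ) (L m : ℤ) : shiftPt n (Pt n L m) = Pt n L (m+1) := by
  ext
  · show L - ((n:ℤ)-1) * m - ((n:ℤ) - 1) = L - ((n:ℤ)-1)*(m+1)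
    ring
  · show (n:ℤ) * m - L + (n:ℤ) = (n:ℤ)*(m+1) - L
    ring

lemma shiftPt_eq (n : ℕ) (p : ℤ × ℤ) : shiftPt n p = Pt n (Lco n p) (mco p + 1) := by
  rw [← shiftPt_Pt, Pt_coords]

def shInv (n : ℕ) (p : ℤ × ℤ) : ℤ × ℤ := (p.1 + ((n:ℤ) - 1), p.2 - n)

lemma sh_shInv (n : ℕ) (p : ℤ × ℤ) : shiftPt n (shInv n p) = p := by
  ext <;> show _ = _ <;> simp [shiftPt, shInv] <;> ring
lemma shInv_sh (n : ℕ) (p : ℤ × ℤ) : shInv n (shiftPt n p) = p := by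
  ext <;> show _ = _ <;> simp [shiftPt, shInv]

lemma s_shift (hn : 1 ≤ n) (hper : ∀ i, a (i + n) = a i)
    (hx : ∀ l, l ≤ Ax → x l = (a l : ℝ)) (p : ℤ × ℤ) :
    sPatR n a x (shiftPt n p) = sPatR n a x p - (klev n a : ℝ) := by
  rw [shiftPt_eq]
  conv_rhs => rw [← Pt_coords n p]
  exact sS hn hper hx (Lco n p) (mco p)

lemma latadj_tr (t : ℤ × ℤ) {p q : ℤ × ℤ} (h : LatAdj p q) :
    LatAdj (p.1 + t.1, p.2 + t.2) (q.1 + t.1, q.2 + t.2) := by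
  have pe : ∀ (u : ℤ × ℤ) (b c : ℤ), u.1 = b → u.2 = c → u = (b, c) := by
    intro u b c h1 h2; ext <;> simp [h1, h2]
  rcases h with h | h | h | h <;> subst h <;> simp only [LatAdj]
  · exact Or.inl (pe _ _ _ (by ring) (by ring))
  · exact Or.inr (Or.inl (pe _ _ _ (by ring) (by ring)))
  · exact Or.inr (Or.inr (Or.inl (pe _ _ _ (by ring) (by ring))))
  · exact Or.inr (Or.inr (Or.inr (pe _ _ _ (by ring) (by ring))))

lemma latadj_sh {p q : ℤ × ℤ} (h : LatAdj p q) : LatAdj (shiftPt n p) (shiftPt n q) := by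
  have := latadj_tr (-((n:ℤ)-1), (n:ℤ)) h
  have e1 : ∀ r : ℤ × ℤ, (r.1 + -((n:ℤ)-1), r.2 + (n:ℤ)) = shiftPt n r := by
    intro r; ext <;> show _ = _ <;> simp [shiftPt] <;> ring
  rwa [e1, e1] at this

lemma latadj_shInv {p q : ℤ × ℤ} (h : LatAdj p q) : LatAdj (shInv n p) (shInv n q) := by
  have := latadj_tr (((n:ℤ)-1), -(n:ℤ)) h
  have e1 : ∀ r : ℤ × ℤ, (r.1 + ((n:ℤ)-1), r.2 + -(n:ℤ)) = shInv n r := by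
    intro r; ext <;> show _ = _ <;> simp [shInv] <;> ring
  rwa [e1, e1] at this

lemma shiftPt_inj {p q : ℤ × ℤ} (h : shiftPt n p = shiftPt n q) : p = q := by
  have := congrArg (shInv n) h
  rwa [shInv_sh, shInv_sh] at this

lemma adj_sh (hn : 1 ≤ n) (hper : ∀ i, a (i + n) = a i)
    (hx : ∀ l, l ≤ Ax → x l = (a l : ℝ)) {p q : ℤ × ℤ}
    (h : (ThetaGraph n a x).Adj p q) : (ThetaGraph n a x).Adj (shiftPt n p) (shiftPt n q) := by
  obtain ⟨hne, hlat, hs⟩ := theta_adj_iff.mp h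
  refine theta_adj_iff.mpr ⟨fun he => hne (shiftPt_inj he), ?_, ?_⟩
  · rcases hlat with h' | h'
    · exact Or.inl (latadj_sh h')
    · exact Or.inr (latadj_sh h')
  · rw [s_shift hn hper hx, s_shift hn hper hx, hs]

lemma adj_shInv (hn : 1 ≤ n) (hper : ∀ i, a (i + n) = a i)
    (hx : ∀ l, l ≤ Ax → x l = (a l : ℝ)) {p q : ℤ × ℤ}
    (h : (ThetaGraph n a x).Adj p q) : (ThetaGraph n a x).Adj (shInv n p) (shInv n q) := by
  have h2 := adj_sh hn hper hx (p := shInv n p) (q := shInv n q)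
  obtain ⟨hne, hlat, hs⟩ := theta_adj_iff.mp h
  refine theta_adj_iff.mpr ⟨?_, ?_, ?_⟩
  · intro he
    apply hne
    have := congrArg (shiftPt n) he
    rwa [sh_shInv, sh_shInv] at this
  · rcases hlat with h' | h'
    · exact Or.inl (latadj_shInv h')
    · exact Or.inr (latadj_shInv h')
  · have e1 := s_shift hn hper hx (shInv n p)
    have e2 := s_shift hn hper hx (shInv n q)
    rw [sh_shInv] at e1 e2
    linarith

lemma reach_sh (hn : 1 ≤ n) (hper : ∀ i, a (i + n) = a i)
    (hx : ∀ l, l ≤ Ax → x l = (a l : ℝ)) {p q : ℤ × ℤ}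
    (h : (ThetaGraph n a x).Reachable p q) :
    (ThetaGraph n a x).Reachable (shiftPt n p) (shiftPt n q) := by
  obtain ⟨w⟩ := h
  induction w with
  | nil => exact SimpleGraph.Reachable.refl _
  | cons hadj _ ih => exact ((adj_sh hn hper hx hadj).reachable).trans ih

lemma reach_shInv (hn : 1 ≤ n) (hper : ∀ i, a (i + n) = a i)
    (hx : ∀ l, l ≤ Ax → x l = (a l : ℝ)) {p q : ℤ × ℤ}
    (h : (ThetaGraph n a x).Reachable p q) :
    (ThetaGraph n a x).Reachable (shInv n p) (shInv n q) := by
  obtain ⟨w⟩ := h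
  induction w with
  | nil => exact SimpleGraph.Reachable.refl _
  | cons hadj _ ih => exact ((adj_shInv hn hper hx hadj).reachable).trans ih

lemma comp_sh (hn : 1 ≤ n) (hper : ∀ i, a (i + n) = a i)
    (hx : ∀ l, l ≤ Ax → x l = (a l : ℝ)) (p₀ : ℤ × ℤ) :
    shiftRel n (ThetaGraph n a x) ((ThetaGraph n a x).connectedComponentMk p₀)
      ((ThetaGraph n a x).connectedComponentMk (shiftPt n p₀)) := by
  show {p | _} = _
  ext r
  simp only [Set.mem_setOf_eq, Set.mem_image]
  constructor
  · intro hr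
    refine ⟨shInv n r, ?_, sh_shInv n r⟩
    show (ThetaGraph n a x).connectedComponentMk _ = _
    apply SimpleGraph.ConnectedComponent.eq.mpr
    have hreach := SimpleGraph.ConnectedComponent.eq.mp hr
    have := reach_shInv hn hper hx hreach
    rwa [shInv_sh] at this
  · rintro ⟨u, hu, rfl⟩
    show (ThetaGraph n a x).connectedComponentMk _ = _
    apply SimpleGraph.ConnectedComponent.eq.mpr
    exact reach_sh hn hper hx (SimpleGraph.ConnectedComponent.eq.mp hu)

lemma rays (hx : ∀ l, l ≤ Ax → x l = (a l : ℝ)) {B : ℤ} (hB : ∀ l, B ≤ l → x l = 0)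
    (m : ℤ) {L L' : ℤ} (hL : B ≤ L) (hL' : B ≤ L') :
    (ThetaGraph n a x).connectedComponentMk (Pt n L m)
      = (ThetaGraph n a x).connectedComponentMk (Pt n L' m) := by
  have keyn : ∀ d : ℕ, (ThetaGraph n a x).connectedComponentMk (Pt n (B + d) m)
      = (ThetaGraph n a x).connectedComponentMk (Pt n B m) := by
    intro d
    induction d with
    | zero => simp
    | succ e ih =>
        have hadj : (ThetaGraph n a x).Adj (Pt n (B + e) m) (Pt n (B + e + 1) m) :=
          (adj_H_iff hx (B + e) m).mpr (hB _ (by omega))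
        have : (ThetaGraph n a x).connectedComponentMk (Pt n (B + e + 1) m)
            = (ThetaGraph n a x).connectedComponentMk (Pt n (B + e) m) :=
          (SimpleGraph.ConnectedComponent.eq.mpr hadj.reachable).symm
        rw [show (B + ((e+1:ℕ):ℤ)) = B + (e:ℤ) + 1 by push_cast; ring, this, ih]
  have key : ∀ L'' : ℤ, B ≤ L'' → (ThetaGraph n a x).connectedComponentMk (Pt n L'' m)
      = (ThetaGraph n a x).connectedComponentMk (Pt n B m) := by
    intro L'' hL''
    have h2 : L'' = B + ((L'' - B).toNat : ℤ) := by omega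
    rw [h2]
    exact keyn _
  rw [key L hL, key L' hL']

end graph

-- ## Stage E : component structure
def cqv (n : ℕ) (p : ℤ × ℤ) : ℤ := Lco n p - n * mco p
def RRel (a : ℤ → ℤ) (c t : ℤ) : Prop :=
  (c ≤ t ∧ ∀ s : ℤ, c < s → s ≤ t → a s = 0) ∨ (t ≤ c ∧ ∀ s : ℤ, t < s → s ≤ c → a s = 0)

section structureE
variable {n : ℕ} {a : ℤ → ℤ} {v : ℤ → ℝ} {Av : ℤ}

lemma RR_refl (a : ℤ → ℤ) (c : ℤ) : RRel a c c :=
  Or.inl ⟨le_refl _, fun s h1 h2 => absurd h1 (by omega)⟩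

lemma RR_up {b t : ℤ} (h0 : a (b+1) = 0) (h : RRel a (b+1) t) : RRel a b t := by
  rcases h with ⟨h1, h2⟩ | ⟨h1, h2⟩
  · exact Or.inl ⟨by omega, fun s hs1 hs2 => by
      rcases eq_or_ne s (b+1) with rfl | hne
      · exact h0
      · exact h2 s (by omega) hs2⟩
  · rcases eq_or_ne t (b+1) with rfl | hne
    · exact Or.inl ⟨by omega, fun s hs1 hs2 => by
        have : s = b + 1 := by omega
        rw [this]; exact h0⟩
    · exact Or.inr ⟨by omega, fun s hs1 hs2 => by
        rcases eq_or_ne s (b+1) with rfl | hne2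
        · exact h0
        · exact h2 s hs1 (by omega)⟩

lemma RR_down {b t : ℤ} (h0 : a b = 0) (h : RRel a (b-1) t) : RRel a b t := by
  rcases h with ⟨h1, h2⟩ | ⟨h1, h2⟩
  · rcases eq_or_ne t (b-1) with rfl | hne
    · exact Or.inr ⟨by omega, fun s hs1 hs2 => by
        have : s = b := by omega
        rw [this]; exact h0⟩
    · exact Or.inl ⟨by omega, fun s hs1 hs2 => h2 s (by omega) hs2⟩
  · exact Or.inr ⟨by omega, fun s hs1 hs2 => by
      rcases eq_or_ne s b with rfl | hne
      · exact h0
      · exact h2 s hs1 (by omega)⟩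

lemma nzwin (hn : 1 ≤ n) (hper : ∀ i, a (i + n) = a i) (hpos : ∀ i, 0 ≤ a i)
    (hk : 0 < klev n a) (u : ℤ) : ∃ s : ℤ, u < s ∧ s ≤ u + n ∧ a s ≠ 0 := by
  by_contra hcon
  push_neg at hcon
  have : ∑ l ∈ Finset.Ioc u (u + (n:ℤ)), a l = 0 := by
    apply Finset.sum_eq_zero
    intro l hl
    have hl' := Finset.mem_Ioc.mp hl
    exact hcon l hl'.1 hl'.2
  rw [persum hn hper u] at this
  omega

lemma RR_bnd (hn : 1 ≤ n) (hper : ∀ i, a (i + n) = a i) (hpos : ∀ i, 0 ≤ a i)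
    (hk : 0 < klev n a) {c t : ℤ} (h : RRel a c t) : c - n < t ∧ t < c + n := by
  constructor
  · rcases h with ⟨h1, _⟩ | ⟨h1, h2⟩
    · omega
    · by_contra hcon
      obtain ⟨s, hs1, hs2, hs3⟩ := nzwin hn hper hpos hk t
      exact hs3 (h2 s hs1 (by omega))
  · rcases h with ⟨h1, h2⟩ | ⟨h1, _⟩
    · by_contra hcon
      obtain ⟨s, hs1, hs2, hs3⟩ := nzwin hn hper hpos hk c
      exact hs3 (h2 s hs1 (by omega))
    · omega

lemma supp_mk {p r : ℤ × ℤ} (w : (ThetaGraph n a v).Walk p r) :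
    ∀ u ∈ w.support, (ThetaGraph n a v).connectedComponentMk u
      = (ThetaGraph n a v).connectedComponentMk p := by
  induction w with
  | nil =>
      intro u hu
      simp only [SimpleGraph.Walk.support_nil, List.mem_singleton] at hu
      rw [hu]
  | @cons p' u' r' hadj w' ih =>
      intro u hu
      simp only [SimpleGraph.Walk.support_cons, List.mem_cons] at hu
      rcases hu with rfl | hu
      · rfl
      · rw [ih u hu]
        exact (SimpleGraph.ConnectedComponent.eq.mpr hadj.reachable).symm

-- the cq step upgrade
lemma cq_step (hn : 1 ≤ n) (hper : ∀ i, a (i + n) = a i)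
    (hxv : ∀ l, l ≤ Av → v l = (a l : ℝ)) {A₀ : ℤ} (hA : A₀ + n ≤ Av)
    {p u : ℤ × ℤ} (hadj : (ThetaGraph n a v).Adj p u) (hp : Lco n p ≤ A₀)
    {t : ℤ} (h : RRel a (cqv n u) t) : RRel a (cqv n p) t := by
  have hap : ∀ L : ℤ, a (L - n * mco p) = a L := by
    intro L
    have := aper hper (-(mco p)) L
    rw [show L + (n:ℤ) * (-(mco p)) = L - n * mco p by ring] at this
    exact this
  rcases adj_classify hn hper hxv hadj with ⟨h1, h2, h3⟩ | ⟨h1, h2, h3⟩ | ⟨h1, h2, h3⟩ | ⟨h1, h2, h3⟩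
  · -- Lco u = Lco p + 1 : cq u = cq p + 1
    have hcq : cqv n u = cqv n p + 1 := by simp only [cqv]; rw [h1, h2]; ring
    have ha : a (cqv n p + 1) = 0 := by
      have hv0 : v (Lco n p + 1) = 0 := h3
      have hva : v (Lco n p + 1) = (a (Lco n p + 1) : ℝ) := hxv _ (by omega)
      have : (a (Lco n p + 1) : ℝ) = 0 := by rw [← hva]; exact hv0
      have haz : a (Lco n p + 1) = 0 := by exact_mod_cast this
      have := hap (Lco n p + 1)
      rw [show Lco n p + 1 - (n:ℤ) * mco p = cqv n p + 1 by simp only [cqv]; ring] at this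
      rw [this]; exact haz
    rw [hcq] at h
    exact RR_up ha h
  · have hcq : cqv n u = cqv n p - 1 := by simp only [cqv]; rw [h1, h2]; ring
    have ha : a (cqv n p) = 0 := by
      have hv0 : v (Lco n p) = 0 := h3
      have hva : v (Lco n p) = (a (Lco n p) : ℝ) := hxv _ (by omega)
      have : (a (Lco n p) : ℝ) = 0 := by rw [← hva]; exact hv0
      have haz : a (Lco n p) = 0 := by exact_mod_cast this
      have := hap (Lco n p)
      rw [show Lco n p - (n:ℤ) * mco p = cqv n p by simp only [cqv]] at this
      rw [this]; exact haz
    rw [hcq] at h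
    exact RR_down ha h
  · have hcq : cqv n u = cqv n p := by
      simp only [cqv]
      rw [h1, h2]; ring
    rwa [hcq] at h
  · have hcq : cqv n u = cqv n p := by
      simp only [cqv]
      rw [h1, h2]; ring
    rwa [hcq] at h

lemma cq_band (hn : 1 ≤ n) (hper : ∀ i, a (i + n) = a i)
    (hxv : ∀ l, l ≤ Av → v l = (a l : ℝ))
    {p u : ℤ × ℤ} (hadj : (ThetaGraph n a v).Adj p u) :
    cqv n u = cqv n p ∨ cqv n u = cqv n p + 1 ∨ cqv n u = cqv n p - 1 := by
  rcases adj_classify hn hper hxv hadj with ⟨h1, h2, -⟩ | ⟨h1, h2, -⟩ | ⟨h1, h2, -⟩ | ⟨h1, h2, -⟩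
  · right; left; simp only [cqv]; rw [h1, h2]; ring
  · right; right; simp only [cqv]; rw [h1, h2]; ring
  · left; simp only [cqv]; rw [h1, h2]; ring
  · left; simp only [cqv]; rw [h1, h2]; ring

lemma lco_band (hn : 1 ≤ n) (hper : ∀ i, a (i + n) = a i)
    (hxv : ∀ l, l ≤ Av → v l = (a l : ℝ))
    {p u : ℤ × ℤ} (hadj : (ThetaGraph n a v).Adj p u) :
    Lco n p - n ≤ Lco n u ∧ Lco n u ≤ Lco n p + n := by
  have hν : (1:ℤ) ≤ (n:ℤ) := by exact_mod_cast hn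
  rcases adj_classify hn hper hxv hadj with ⟨h1, -, -⟩ | ⟨h1, -, -⟩ | ⟨h1, -, -⟩ | ⟨h1, -, -⟩ <;>
    omega

lemma walk_left (hn : 1 ≤ n) (hper : ∀ i, a (i + n) = a i)
    (hxv : ∀ l, l ≤ Av → v l = (a l : ℝ)) {A₀ B₀ : ℤ}
    (hA : A₀ + n ≤ Av) (hAB : A₀ + n ≤ B₀) :
    ∀ {p r : ℤ × ℤ} (w : (ThetaGraph n a v).Walk p r), Lco n p ≤ A₀ →
    (∀ u ∈ w.support, ¬ (A₀ < Lco n u ∧ Lco n u ≤ B₀)) →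
    Lco n r ≤ A₀ ∧ RRel a (cqv n p) (cqv n r) := by
  intro p r w
  induction w with
  | nil => exact fun hp _ => ⟨hp, RR_refl a _⟩
  | @cons p' u' r' hadj w' ih =>
      intro hp hnomid
      have hu'supp : u' ∈ (SimpleGraph.Walk.cons hadj w').support := by
        simp only [SimpleGraph.Walk.support_cons, List.mem_cons]
        exact Or.inr (SimpleGraph.Walk.start_mem_support w')
      have hu'L : Lco n u' ≤ A₀ := by
        have hband := lco_band hn hper hxv hadj
        have := hnomid u' hu'supp
        omega
      have ihres := ih hu'L (fun u hu => hnomid u (by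
        simp only [SimpleGraph.Walk.support_cons, List.mem_cons]
        exact Or.inr hu))
      exact ⟨ihres.1, cq_step hn hper hxv hA hadj hp ihres.2⟩

lemma walk_anchor (hn : 1 ≤ n) (hper : ∀ i, a (i + n) = a i)
    (hxv : ∀ l, l ≤ Av → v l = (a l : ℝ)) {A₀ B₀ : ℤ}
    (hA : A₀ + n ≤ Av) (hAB : A₀ + n ≤ B₀) :
    ∀ {p r : ℤ × ℤ} (w : (ThetaGraph n a v).Walk p r), Lco n p ≤ A₀ →
    (A₀ < Lco n r ∧ Lco n r ≤ B₀) →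
    ∃ u, (ThetaGraph n a v).connectedComponentMk u = (ThetaGraph n a v).connectedComponentMk p ∧
      (A₀ < Lco n u ∧ Lco n u ≤ B₀) ∧ ∃ t, RRel a (cqv n p) t ∧ t - 1 ≤ cqv n u ∧ cqv n u ≤ t + 1 := by
  intro p r w
  induction w with
  | nil => intro hp hr; exfalso; omega
  | @cons p' u' r' hadj w' ih =>
      intro hp hr
      by_cases hu : A₀ < Lco n u'
      · have hband := lco_band hn hper hxv hadj
        refine ⟨u', ?_, ⟨hu, by omega⟩, cqv n p', RR_refl a _, ?_, ?_⟩
        · exact (SimpleGraph.ConnectedComponent.eq.mpr hadj.reachable).symm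
        · have := cq_band hn hper hxv hadj
          omega
        · have := cq_band hn hper hxv hadj
          omega
      · push_neg at hu
        obtain ⟨u, hmk, hmid, t, hRR, hband⟩ := ih hu hr
        refine ⟨u, ?_, hmid, t, cq_step hn hper hxv hA hadj hp hRR, hband⟩
        rw [hmk]
        exact (SimpleGraph.ConnectedComponent.eq.mpr hadj.reachable).symm

lemma midfin (hn : 1 ≤ n) (hper : ∀ i, a (i + n) = a i)
    (hxv : ∀ l, l ≤ Av → v l = (a l : ℝ)) (hk : 0 < klev n a)
    (c : (ThetaGraph n a v).ConnectedComponent) (A₀ B₀ : ℤ) :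
    {q : ℤ × ℤ | (ThetaGraph n a v).connectedComponentMk q = c
      ∧ A₀ < Lco n q ∧ Lco n q ≤ B₀}.Finite := by
  apply Set.Finite.of_finite_image (f := Lco n)
  · apply Set.Finite.subset (Set.finite_Ioc A₀ B₀)
    rintro y ⟨q, hq, rfl⟩
    exact Set.mem_Ioc.mpr ⟨hq.2.1, hq.2.2⟩
  · intro q hq q' hq' hL
    exact col_inj' hn hper hxv hk (hq.1.trans hq'.1.symm) hL

lemma bounds_of_finite {S : Set ℤ} (h : S.Finite) : ∃ lo hi : ℤ, ∀ s ∈ S, lo ≤ s ∧ s ≤ hi := by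
  obtain ⟨hi, hhi⟩ := h.bddAbove
  obtain ⟨lo, hlo⟩ := h.bddBelow
  exact ⟨lo, hi, fun s hs => ⟨hlo hs, hhi hs⟩⟩

lemma left_cq_bounds (hn : 1 ≤ n) (hper : ∀ i, a (i + n) = a i)
    (hxv : ∀ l, l ≤ Av → v l = (a l : ℝ)) (hpos : ∀ i, 0 ≤ a i) (hk : 0 < klev n a)
    {A₀ B₀ : ℤ} (hA : A₀ + n ≤ Av) (hAB : A₀ + n ≤ B₀)
    (c : (ThetaGraph n a v).ConnectedComponent) :
    ∃ cmin cmax : ℤ, ∀ q, (ThetaGraph n a v).connectedComponentMk q = c →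
      Lco n q ≤ A₀ → cmin ≤ cqv n q ∧ cqv n q ≤ cmax := by
  by_cases hex : ∃ q₀, (ThetaGraph n a v).connectedComponentMk q₀ = c ∧ Lco n q₀ ≤ A₀
  · obtain ⟨q₀, hq₀c, hq₀L⟩ := hex
    by_cases hM : ∃ r₀, (ThetaGraph n a v).connectedComponentMk r₀ = c
        ∧ A₀ < Lco n r₀ ∧ Lco n r₀ ≤ B₀
    · obtain ⟨r₀, hr₀c, hr₀m⟩ := hM
      obtain ⟨lo, hi, hbd⟩ := bounds_of_finite
        ((midfin hn hper hxv hk c A₀ B₀).image (cqv n))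
      refine ⟨lo - n - 1, hi + n + 1, ?_⟩
      intro q hqc hqL
      have hreach : (ThetaGraph n a v).Reachable q r₀ :=
        SimpleGraph.ConnectedComponent.eq.mp (hqc.trans hr₀c.symm)
      obtain ⟨w⟩ := hreach
      obtain ⟨u, humk, humid, t, hRR, hb1, hb2⟩ :=
        walk_anchor hn hper hxv hA hAB w hqL hr₀m
      have hcu : cqv n u ∈ cqv n '' {q : ℤ × ℤ | (ThetaGraph n a v).connectedComponentMk q = c
          ∧ A₀ < Lco n q ∧ Lco n q ≤ B₀} :=
        ⟨u, ⟨humk.trans hqc, humid⟩, rfl⟩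
      have := hbd _ hcu
      have hband := RR_bnd hn hper hpos hk hRR
      omega
    · push_neg at hM
      refine ⟨cqv n q₀ - n, cqv n q₀ + n, ?_⟩
      intro q hqc hqL
      have hreach : (ThetaGraph n a v).Reachable q₀ q :=
        SimpleGraph.ConnectedComponent.eq.mp (hq₀c.trans hqc.symm)
      obtain ⟨w⟩ := hreach
      have hnomid : ∀ u ∈ w.support, ¬ (A₀ < Lco n u ∧ Lco n u ≤ B₀) := by
        intro u hu
        have := supp_mk w u hu
        rw [hq₀c] at this
        intro hmid
        have := hM u this hmid.1
        omega
      have := (walk_left hn hper hxv hA hAB w hq₀L hnomid).2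
      have hband := RR_bnd hn hper hpos hk this
      omega
  · push_neg at hex
    refine ⟨0, 0, ?_⟩
    intro q hq hL
    have := hex q hq
    omega

lemma right_mco (hn : 1 ≤ n) (hper : ∀ i, a (i + n) = a i)
    (hxv : ∀ l, l ≤ Av → v l = (a l : ℝ)) (hk : 0 < klev n a)
    {B₀ : ℤ} (hB : ∀ l, B₀ ≤ l → v l = 0) {q q' : ℤ × ℤ}
    (h : (ThetaGraph n a v).connectedComponentMk q = (ThetaGraph n a v).connectedComponentMk q')
    (hq : B₀ ≤ Lco n q) (hq' : B₀ ≤ Lco n q') : mco q = mco q' := by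
  set W := max (Lco n q) (Lco n q') with hW
  have e1 : (ThetaGraph n a v).connectedComponentMk q
      = (ThetaGraph n a v).connectedComponentMk (Pt n W (mco q)) := by
    conv_lhs => rw [← Pt_coords n q]
    exact rays hxv hB (mco q) hq (by omega)
  have e2 : (ThetaGraph n a v).connectedComponentMk q'
      = (ThetaGraph n a v).connectedComponentMk (Pt n W (mco q')) := by
    conv_lhs => rw [← Pt_coords n q']
    exact rays hxv hB (mco q') hq' (by omega)
  have : (ThetaGraph n a v).connectedComponentMk (Pt n W (mco q))
      = (ThetaGraph n a v).connectedComponentMk (Pt n W (mco q')) := by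
    rw [← e1, ← e2, h]
  exact col_inj hn hper hxv hk this

end structureE

-- ## Stage F : assembly helpers
section assembly
variable {n : ℕ} {a : ℤ → ℤ} {v : ℤ → ℝ} {Av : ℤ}

lemma fst_formula (n : ℕ) (p : ℤ × ℤ) : p.1 = Lco n p - ((n:ℤ)-1) * mco p := by
  conv_lhs => rw [← Pt_coords n p]
  rfl

lemma frozen_eq {x : ℤ → ℝ} {K : ℤ} (hxv : ∀ l, l ≤ K → x l = v l)
    {q : ℤ × ℤ} (hq : Lco n q ≤ K) : sPatR n a x q = sPatR n a v q := by
  rw [sPat_eq, sPat_eq]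
  congr 1
  apply finsum_congr
  intro l
  by_cases hl : l ≤ Lco n q
  · rw [if_pos hl, if_pos hl, hxv l (by omega)]
  · rw [if_neg hl, if_neg hl]

-- rows of points with Lco ≤ B₀ are bounded above, for each component
lemma rows_bounded (hn : 1 ≤ n) (hper : ∀ i, a (i + n) = a i)
    (hxv : ∀ l, l ≤ Av → v l = (a l : ℝ)) (hpos : ∀ i, 0 ≤ a i) (hk : 0 < klev n a)
    {A₀ B₀ : ℤ} (hA : A₀ + n ≤ Av) (hAB : A₀ + n ≤ B₀)
    (c : (ThetaGraph n a v).ConnectedComponent) :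
    ∃ R : ℤ, ∀ q, (ThetaGraph n a v).connectedComponentMk q = c →
      Lco n q ≤ B₀ → q.1 ≤ R := by
  obtain ⟨cmin, cmax, hcq⟩ := left_cq_bounds hn hper hxv hpos hk hA hAB c
  obtain ⟨lo, hi, hbd⟩ := bounds_of_finite
    ((midfin hn hper hxv hk c A₀ B₀).image (fun q => q.1))
  have hν : (1:ℤ) ≤ (n:ℤ) := by exact_mod_cast hn
  set D : ℤ := A₀ + ((n:ℤ)-1) * cmax with hD
  refine ⟨max hi (|D| + 1), ?_⟩
  intro q hqc hqB
  by_cases hql : Lco n q ≤ A₀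
  · -- left point
    have hb := hcq q hqc hql
    have hnrow : (n:ℤ) * q.1 = ((n:ℤ)-1) * cqv n q + Lco n q := by
      rw [fst_formula n q]; simp only [cqv]; ring
    have hmul : ((n:ℤ)-1) * cqv n q ≤ ((n:ℤ)-1) * cmax :=
      mul_le_mul_of_nonneg_left hb.2 (by omega)
    have hle : (n:ℤ) * q.1 ≤ D := by omega
    rcases le_or_gt q.1 0 with h0 | h0
    · have : (0:ℤ) ≤ |D| := abs_nonneg D
      omega
    · have : (0:ℤ) ≤ ((n:ℤ)-1) * q.1 := mul_nonneg (by omega) (by omega)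
      have hDd : D ≤ |D| := le_abs_self D
      have hmr : (n:ℤ) * q.1 = ((n:ℤ)-1) * q.1 + q.1 := by ring
      omega
  · -- mid point
    push_neg at hql
    have : q.1 ∈ (fun q : ℤ × ℤ => q.1) '' {q : ℤ × ℤ |
        (ThetaGraph n a v).connectedComponentMk q = c ∧ A₀ < Lco n q ∧ Lco n q ≤ B₀} :=
      ⟨q, ⟨hqc, hql, hqB⟩, rfl⟩
    have := (hbd _ this).2
    omega

-- low rows are deep-left, for each component
lemma low_rows_left (hn : 1 ≤ n) (hper : ∀ i, a (i + n) = a i)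
    (hxv : ∀ l, l ≤ Av → v l = (a l : ℝ)) (hpos : ∀ i, 0 ≤ a i) (hk : 0 < klev n a)
    {A₀ B₀ : ℤ} (hA : A₀ + n ≤ Av) (hAB : A₀ + n ≤ B₀)
    (hB : ∀ l, B₀ ≤ l → v l = 0)
    (c : (ThetaGraph n a v).ConnectedComponent) (K : ℤ) (hK : K ≤ A₀) :
    ∃ N : ℤ, ∀ q, (ThetaGraph n a v).connectedComponentMk q = c →
      q.1 ≤ N → Lco n q ≤ K := by
  obtain ⟨cmin, cmax, hcq⟩ := left_cq_bounds hn hper hxv hpos hk hA hAB c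
  obtain ⟨lo, hi, hbd⟩ := bounds_of_finite
    ((midfin hn hper hxv hk c A₀ B₀).image (fun q => q.1))
  have hν : (1:ℤ) ≤ (n:ℤ) := by exact_mod_cast hn
  -- a bound below for rows of right points (if any)
  have hright : ∃ RB : ℤ, ∀ q, (ThetaGraph n a v).connectedComponentMk q = c →
      B₀ < Lco n q → RB ≤ q.1 := by
    by_cases hex : ∃ qr, (ThetaGraph n a v).connectedComponentMk qr = c ∧ B₀ < Lco n qr
    · obtain ⟨qr, hqr, hqrB⟩ := hex
      refine ⟨B₀ + 1 - ((n:ℤ)-1) * mco qr, ?_⟩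
      intro q hqc hqB
      have hm : mco q = mco qr := right_mco hn hper hxv hk hB
        (hqc.trans hqr.symm) (by omega) (by omega)
      rw [fst_formula n q, hm]
      omega
    · push_neg at hex
      exact ⟨0, fun q hqc hqB => absurd hqB (by
        have := hex q hqc
        omega)⟩
  obtain ⟨RB, hRB⟩ := hright
  refine ⟨min (min (lo - 1) (RB - 1)) (min 0 (K + ((n:ℤ)-1) * cmin)), ?_⟩
  intro q hqc hqr
  by_cases hqB : B₀ < Lco n q
  · have := hRB q hqc hqB
    omega
  · push_neg at hqB
    by_cases hql : Lco n q ≤ A₀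
    · -- left: Lco = n*q.1 - (n-1)*cq ≤ n*N - (n-1)*cmin ≤ K
      have hb := hcq q hqc hql
      have hnrow : (n:ℤ) * q.1 = ((n:ℤ)-1) * cqv n q + Lco n q := by
        rw [fst_formula n q]; simp only [cqv]; ring
      set N : ℤ := min (min (lo - 1) (RB - 1)) (min 0 (K + ((n:ℤ)-1) * cmin)) with hN
      have h1 : (n:ℤ) * q.1 ≤ (n:ℤ) * N := mul_le_mul_of_nonneg_left hqr (by omega)
      have h2 : (n:ℤ) * N ≤ N := by
        have hN0 : N ≤ 0 := by omega
        nlinarith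
      have h3 : ((n:ℤ)-1) * cmin ≤ ((n:ℤ)-1) * cqv n q :=
        mul_le_mul_of_nonneg_left hb.1 (by omega)
      omega
    · push_neg at hql
      exfalso
      have : q.1 ∈ (fun q : ℤ × ℤ => q.1) '' {q : ℤ × ℤ |
          (ThetaGraph n a v).connectedComponentMk q = c ∧ A₀ < Lco n q ∧ Lco n q ≤ B₀} :=
        ⟨q, ⟨hqc, hql, hqB⟩, rfl⟩
      have := (hbd _ this).1
      omega

end assembly

/-- For a vertex `v` of `Π`: exactly one shift-equivalence class of connected components
of `Θ(v)` (i.e. exactly one of the `m(λ)` components of `Δ_v`) contains vertices `(i,j)`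
with arbitrarily large row index `i`, and its components contain exactly one vertex in
each sufficiently high-numbered row.  Moreover, for every point `x` of the tangent cone
`C_v`, all coordinates `s_{i,j}(x)` on that component with `i` sufficiently large are
equal, and `s_{i,j}(x) = s_{i,j}(v)` on each component for `i` sufficiently small. -/
theorem stmt19 (n : ℕ) (hn : 2 ≤ n) (a : ℤ → ℤ)
    (hper : ∀ i, a (i + n) = a i) (hpos : ∀ i, 0 ≤ a i) (hk : 0 < klev n a)
    (v : ℤ → ℝ) (hv : v ∈ PiPoly n a) (hvert : IsVertexPi n a v) :
    (∃! q : Quotient (Relation.EqvGen.setoid (shiftRel n (ThetaGraph n a v))),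
      ∀ c : (ThetaGraph n a v).ConnectedComponent,
        Quotient.mk (Relation.EqvGen.setoid (shiftRel n (ThetaGraph n a v))) c = q →
        ((∀ M : ℤ, ∃ p : ℤ × ℤ,
            (ThetaGraph n a v).connectedComponentMk p = c ∧ M ≤ p.1) ∧
         ∃ N : ℤ, ∀ i : ℤ, N ≤ i →
           Nat.card {p : ℤ × ℤ //
             (ThetaGraph n a v).connectedComponentMk p = c ∧ p.1 = i} = 1)) ∧
    (∀ x ∈ coneAtPi n a v, ∀ c : (ThetaGraph n a v).ConnectedComponent,
      ((∀ M : ℤ, ∃ p : ℤ × ℤ,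
          (ThetaGraph n a v).connectedComponentMk p = c ∧ M ≤ p.1) →
        ∃ N : ℤ, ∀ p p' : ℤ × ℤ,
          (ThetaGraph n a v).connectedComponentMk p = c →
          (ThetaGraph n a v).connectedComponentMk p' = c →
          N ≤ p.1 → N ≤ p'.1 → sPatR n a x p = sPatR n a x p') ∧
      (∃ N : ℤ, ∀ p : ℤ × ℤ, (ThetaGraph n a v).connectedComponentMk p = c →
        p.1 ≤ N → sPatR n a x p = sPatR n a v p)) := by
  obtain ⟨⟨⟨Bv, hBv⟩, ⟨Av, hAv⟩⟩, hvpos, hvchi⟩ := hv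
  have hn1 : 1 ≤ n := by omega
  have hν : (2:ℤ) ≤ (n:ℤ) := by exact_mod_cast hn
  set A₀ : ℤ := min Av 0 - 2*(n:ℤ) - 2 with hA₀def
  set B₀ : ℤ := max Bv 0 + 2*(n:ℤ) + 2 with hB₀def
  have hA : A₀ + (n:ℤ) ≤ Av := by omega
  have hAB : A₀ + (n:ℤ) ≤ B₀ := by omega
  have hxv : ∀ l, l ≤ Av → v l = (a l : ℝ) := hAv
  have hB : ∀ l, B₀ ≤ l → v l = 0 := fun l hl => hBv l (by omega)
  have rays' : ∀ (m L L' : ℤ), B₀ ≤ L → B₀ ≤ L' →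
      (ThetaGraph n a v).connectedComponentMk (Pt n L m)
        = (ThetaGraph n a v).connectedComponentMk (Pt n L' m) :=
    fun m L L' h h' => rays hxv hB m h h'
  -- the orbit predicate
  have hrel : ∀ c c', shiftRel n (ThetaGraph n a v) c c' →
      ((∃ m : ℤ, c = (ThetaGraph n a v).connectedComponentMk (Pt n B₀ m)) ↔
       (∃ m : ℤ, c' = (ThetaGraph n a v).connectedComponentMk (Pt n B₀ m))) := by
    intro c c' hcc
    constructor
    · rintro ⟨m, rfl⟩
      refine ⟨m + 1, ?_⟩
      have hmem : shiftPt n (Pt n B₀ m) ∈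
          {p | (ThetaGraph n a v).connectedComponentMk p = c'} := by
        rw [hcc]
        exact ⟨Pt n B₀ m, rfl, rfl⟩
      rw [Set.mem_setOf_eq, shiftPt_Pt] at hmem
      exact hmem.symm
    · rintro ⟨m, rfl⟩
      have hmem : Pt n B₀ m ∈ {p | (ThetaGraph n a v).connectedComponentMk p
          = (ThetaGraph n a v).connectedComponentMk (Pt n B₀ m)} := rfl
      rw [hcc] at hmem
      obtain ⟨r, hr, hrsh⟩ := hmem
      refine ⟨m - 1, ?_⟩
      have hreq : r = Pt n B₀ (m - 1) := by
        have h2 : shiftPt n (Pt n B₀ (m-1)) = Pt n B₀ m := by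
          rw [shiftPt_Pt]
          congr 1
          ring
        exact shiftPt_inj (hrsh.trans h2.symm)
      rw [← hr, hreq]
  have hEqv : ∀ c c', Relation.EqvGen (shiftRel n (ThetaGraph n a v)) c c' →
      ((∃ m : ℤ, c = (ThetaGraph n a v).connectedComponentMk (Pt n B₀ m)) ↔
       (∃ m : ℤ, c' = (ThetaGraph n a v).connectedComponentMk (Pt n B₀ m))) := by
    intro c c' h
    induction h with
    | rel c c' hcc => exact hrel c c' hcc
    | refl c => exact Iff.rfl
    | symm c c' _ ih => exact ih.symm
    | trans c c' c'' _ _ ih1 ih2 => exact ih1.trans ih2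
  have hORB : ∀ m : ℤ, Relation.EqvGen (shiftRel n (ThetaGraph n a v))
      ((ThetaGraph n a v).connectedComponentMk (Pt n B₀ 0))
      ((ThetaGraph n a v).connectedComponentMk (Pt n B₀ m)) := by
    intro m
    induction m using Int.induction_on with
    | zero => exact Relation.EqvGen.refl _
    | succ k ih =>
        refine Relation.EqvGen.trans _ _ _ ih (Relation.EqvGen.rel _ _ ?_)
        have := comp_sh hn1 hper hxv (Pt n B₀ (k:ℤ))
        rwa [shiftPt_Pt] at this
    | pred k ih =>
        refine Relation.EqvGen.trans _ _ _ ih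
          (Relation.EqvGen.symm _ _ (Relation.EqvGen.rel _ _ ?_))
        have hc := comp_sh hn1 hper hxv (Pt n B₀ (-(k:ℤ)-1))
        rw [shiftPt_Pt, show (-(k:ℤ)-1) + 1 = -(k:ℤ) by ring] at hc
        exact hc
  have hquot : ∀ c, Quotient.mk (Relation.EqvGen.setoid (shiftRel n (ThetaGraph n a v))) c
      = Quotient.mk (Relation.EqvGen.setoid (shiftRel n (ThetaGraph n a v)))
        ((ThetaGraph n a v).connectedComponentMk (Pt n B₀ 0)) ↔
      Relation.EqvGen (shiftRel n (ThetaGraph n a v)) c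
        ((ThetaGraph n a v).connectedComponentMk (Pt n B₀ 0)) := by
    intro c
    rw [Quotient.eq]
    exact Iff.rfl
  -- A ∧ B for ray components
  have hray_AB : ∀ m : ℤ,
      (∀ M : ℤ, ∃ p : ℤ × ℤ, (ThetaGraph n a v).connectedComponentMk p
        = (ThetaGraph n a v).connectedComponentMk (Pt n B₀ m) ∧ M ≤ p.1) ∧
      ∃ N : ℤ, ∀ i : ℤ, N ≤ i →
        Nat.card {p : ℤ × ℤ // (ThetaGraph n a v).connectedComponentMk p
          = (ThetaGraph n a v).connectedComponentMk (Pt n B₀ m) ∧ p.1 = i} = 1 := by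
    intro m
    obtain ⟨R, hR⟩ := rows_bounded hn1 hper hxv hpos hk hA hAB
      ((ThetaGraph n a v).connectedComponentMk (Pt n B₀ m))
    constructor
    · intro M
      refine ⟨Pt n (max B₀ (M + ((n:ℤ)-1)*m)) m, ?_, ?_⟩
      · exact rays' m _ _ (by omega) (le_refl _)
      · rw [Pt_fst]
        omega
    · refine ⟨max (R+1) (B₀ + 1 - ((n:ℤ)-1)*m), ?_⟩
      intro i hi
      have hLd : B₀ ≤ i + ((n:ℤ)-1)*m := by omega
      have hdes_mk : (ThetaGraph n a v).connectedComponentMk (Pt n (i + ((n:ℤ)-1)*m) m)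
          = (ThetaGraph n a v).connectedComponentMk (Pt n B₀ m) :=
        rays' m _ _ hLd (le_refl _)
      have hdes_fst : (Pt n (i + ((n:ℤ)-1)*m) m).1 = i := by
        rw [Pt_fst]
        ring
      have huniq : ∀ q, (ThetaGraph n a v).connectedComponentMk q
          = (ThetaGraph n a v).connectedComponentMk (Pt n B₀ m) → q.1 = i →
          q = Pt n (i + ((n:ℤ)-1)*m) m := by
        intro q hq hqi
        have hqB : B₀ < Lco n q := by
          by_contra hcon
          push_neg at hcon
          have := hR q hq hcon
          omega
        have hm : mco q = m := by
          have h1 : (ThetaGraph n a v).connectedComponentMk (Pt n (B₀+1) m)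
              = (ThetaGraph n a v).connectedComponentMk (Pt n B₀ m) :=
            rays' m _ _ (by omega) (le_refl _)
          have h2 := right_mco hn1 hper hxv hk hB (hq.trans h1.symm)
            (by omega) (by rw [Lco_Pt]; omega)
          rw [mco_Pt] at h2
          exact h2
        have hLq : Lco n q = i + ((n:ℤ)-1)*m := by
          have := fst_formula n q
          rw [hm] at this
          omega
        rw [← Pt_coords n q, hLq, hm]
      rw [Nat.card_eq_one_iff_unique]
      refine ⟨⟨?_⟩, ⟨⟨Pt n (i + ((n:ℤ)-1)*m) m, hdes_mk, hdes_fst⟩⟩⟩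
      rintro ⟨q, hq1, hq2⟩ ⟨q', hq1', hq2'⟩
      exact Subtype.ext ((huniq q hq1 hq2).trans (huniq q' hq1' hq2').symm)
  -- components satisfying A are ray components
  have hA_ray : ∀ c : (ThetaGraph n a v).ConnectedComponent,
      (∀ M : ℤ, ∃ p : ℤ × ℤ, (ThetaGraph n a v).connectedComponentMk p = c ∧ M ≤ p.1) →
      ∃ m : ℤ, c = (ThetaGraph n a v).connectedComponentMk (Pt n B₀ m) := by
    intro c hAc
    obtain ⟨R, hR⟩ := rows_bounded hn1 hper hxv hpos hk hA hAB c
    obtain ⟨p₀, hp₀c, hp₀r⟩ := hAc (R+1)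
    have hp₀B : B₀ < Lco n p₀ := by
      by_contra hcon
      push_neg at hcon
      have := hR p₀ hp₀c hcon
      omega
    refine ⟨mco p₀, ?_⟩
    rw [← hp₀c]
    conv_lhs => rw [← Pt_coords n p₀]
    exact rays' (mco p₀) _ _ (by omega) (le_refl _)
  refine ⟨⟨Quotient.mk (Relation.EqvGen.setoid (shiftRel n (ThetaGraph n a v)))
    ((ThetaGraph n a v).connectedComponentMk (Pt n B₀ 0)), ?_, ?_⟩, ?_⟩
  · -- existence
    intro c hc
    have hphi : ∃ m : ℤ, c = (ThetaGraph n a v).connectedComponentMk (Pt n B₀ m) :=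
      (hEqv _ _ ((hquot c).mp hc)).mpr ⟨0, rfl⟩
    obtain ⟨m, rfl⟩ := hphi
    exact hray_AB m
  · -- uniqueness
    intro q' hq'
    obtain ⟨c', rfl⟩ := Quotient.exists_rep q'
    have hABc := hq' c' rfl
    obtain ⟨m, hm⟩ := hA_ray c' hABc.1
    rw [hm]
    exact (hquot _).mpr (by
      rw [← hm]
      rw [hm]
      exact Relation.EqvGen.symm _ _ (hORB m))
  · -- part II
    intro x hx c
    obtain ⟨y, hy, α, hα, hxeq⟩ := hx
    obtain ⟨⟨⟨By, hBy⟩, ⟨Ay, hAy⟩⟩, hypos, hychi⟩ := hy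
    have hxa : ∀ l, l ≤ min (min Av Ay) A₀ → x l = (a l : ℝ) := by
      intro l hl
      rw [hxeq]
      simp only [Pi.add_apply, Pi.smul_apply, Pi.sub_apply, smul_eq_mul]
      rw [hAv l (by omega), hAy l (by omega)]
      ring
    have hx0 : ∀ l, max (max Bv By) B₀ ≤ l → x l = 0 := by
      intro l hl
      rw [hxeq]
      simp only [Pi.add_apply, Pi.smul_apply, Pi.sub_apply, smul_eq_mul]
      rw [hBv l (by omega), hBy l (by omega)]
      ring
    constructor
    · -- II(a)
      intro hAc
      obtain ⟨R, hR⟩ := rows_bounded hn1 hper hxv hpos hk hA hAB c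
      obtain ⟨p₀, hp₀c, hp₀r⟩ := hAc (R+1)
      have hp₀B : B₀ < Lco n p₀ := by
        by_contra hcon
        push_neg at hcon
        have := hR p₀ hp₀c hcon
        omega
      set Cs : ℤ := max (max Bv By) B₀ with hCs
      refine ⟨max (R+1) (Cs + 1 - ((n:ℤ)-1) * mco p₀), ?_⟩
      have key : ∀ q, (ThetaGraph n a v).connectedComponentMk q = c →
          max (R+1) (Cs + 1 - ((n:ℤ)-1) * mco p₀) ≤ q.1 →
          sPatR n a x q = sPatR n a x (Pt n Cs (mco p₀)) := by
        intro q hqc hqN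
        have hqB : B₀ < Lco n q := by
          by_contra hcon
          push_neg at hcon
          have := hR q hqc hcon
          omega
        have hm : mco q = mco p₀ := right_mco hn1 hper hxv hk hB
          (hqc.trans hp₀c.symm) (by omega) (by omega)
        have hLq : Cs ≤ Lco n q := by
          have := fst_formula n q
          rw [hm] at this
          omega
        have hchain := sHchain (n := n) (Ax := min (min Av Ay) A₀) hxa (mco p₀) hLq
        have hz : ∑ l ∈ Finset.Ioc Cs (Lco n q), x l = 0 := by
          apply Finset.sum_eq_zero
          intro l hl
          exact hx0 l (by
            have := (Finset.mem_Ioc.mp hl).1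
            omega)
        conv_lhs => rw [← Pt_coords n q, hm]
        rw [hchain, hz, add_zero]
      intro p p' hpc hp'c hpN hp'N
      rw [key p hpc hpN, key p' hp'c hp'N]
    · -- II(b)
      have hfr : ∀ l, l ≤ min (min Av Ay) A₀ → x l = v l := by
        intro l hl
        rw [hxa l hl, hAv l (by omega)]
      obtain ⟨N, hN⟩ := low_rows_left hn1 hper hxv hpos hk hA hAB hB c
        (min (min Av Ay) A₀) (by omega)
      exact ⟨N, fun q hqc hqN => frozen_eq hfr (hN q hqc hqN)⟩
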